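/- arXiv:1807.10514 — 4 statements merged into one kernel-verified Lean document; each statement's English description precedes it below -/
import Mathlib

section
/- Let f ∈ ℝ^V, let u_α denote the ROF minimizer and let u be a TV flow solution, both with datum f. Let f̄ ∈ ℝ^V be the constant function f̄(v) = (1/|V|) Σ_{w∈V} f(w). Then for every α > 0: ‖f̄‖₂ ≤ ‖u_α‖₂ ≤ ‖u(α)‖₂ ≤ ‖f‖₂. -/
open Finset MeasureTheory

noncomputable section

/-- The graph total variation `J(u) = ∑_{(v,w) ∈ E} |u(w) - u(v)|`. -/
def tvJ {V : Type*} (E : Finset (V × V)) (u : V → ℝ) : ℝ :=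
  ∑ e ∈ E, |u e.2 - u e.1|

/-- The subdifferential of the graph total variation at `u`. -/
def subdiffJ {V : Type*} [Fintype V] (E : Finset (V × V)) (u : V → ℝ) : Set (V → ℝ) :=
  {us | ∀ h : V → ℝ, (∑ v, (h v - u v) * us v) + tvJ E u ≤ tvJ E h}

/-- The divergence of an edge function `H`:
`(div H)(v) = ∑_{(w,v) ∈ E} H((w,v)) - ∑_{(v,w) ∈ E} H((v,w))`. -/
def gdiv {V : Type*} [DecidableEq V] (E : Finset (V × V)) (H : V × V → ℝ) : V → ℝ :=
  fun v => (∑ e ∈ E, if e.2 = v then H e else 0) - (∑ e ∈ E, if e.1 = v then H e else 0)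

/-- The ℓ² norm on `ℝ^V`. -/
def norm2 {V : Type*} [Fintype V] (u : V → ℝ) : ℝ :=
  Real.sqrt (∑ v, (u v) ^ 2)

/-- `u` minimizes `w ↦ ½‖f - w‖₂² + α J(w)` over `ℝ^V`. -/
def IsROFMinimizer {V : Type*} [Fintype V] (E : Finset (V × V)) (f : V → ℝ) (α : ℝ)
    (u : V → ℝ) : Prop :=
  ∀ w : V → ℝ,
    (1 / 2) * (∑ v, (f v - u v) ^ 2) + α * tvJ E u ≤
      (1 / 2) * (∑ v, (f v - w v) ^ 2) + α * tvJ E w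

/-- `u : [0,∞) → ℝ^V` is a TV flow solution with datum `f`: it is Lipschitz on `[0,∞)`,
`u(0) = f`, and `-u'(t) ∈ ∂J(u(t))` for almost every `t > 0`. -/
def IsTVFlowSolution {V : Type*} [Fintype V] (E : Finset (V × V)) (f : V → ℝ)
    (u : ℝ → V → ℝ) : Prop :=
  u 0 = f ∧ (∃ L : NNReal, LipschitzOnWith L u (Set.Ici 0)) ∧
    ∃ u' : ℝ → V → ℝ, ∀ᵐ t ∂(volume : Measure ℝ), 0 < t →
      HasDerivAt u (u' t) t ∧ (fun v => -(u' t v)) ∈ subdiffJ E (u t)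

/- ### Auxiliary lemmas -/

lemma tvJ_nonneg {V : Type*} (E : Finset (V × V)) (x : V → ℝ) : 0 ≤ tvJ E x :=
  Finset.sum_nonneg fun _ _ => abs_nonneg _

lemma tvJ_zero {V : Type*} (E : Finset (V × V)) : tvJ E (fun _ => (0:ℝ)) = 0 := by
  simp [tvJ]

lemma tvJ_add_le {V : Type*} (E : Finset (V × V)) (x y : V → ℝ) :
    tvJ E (fun v => x v + y v) ≤ tvJ E x + tvJ E y := by
  rw [tvJ, tvJ, tvJ, ← Finset.sum_add_distrib]
  apply Finset.sum_le_sum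
  intro e _
  have h : x e.2 + y e.2 - (x e.1 + y e.1) = (x e.2 - x e.1) + (y e.2 - y e.1) := by ring
  rw [h]
  exact abs_add_le _ _

lemma tvJ_smul {V : Type*} (E : Finset (V × V)) {c : ℝ} (hc : 0 ≤ c) (x : V → ℝ) :
    tvJ E (fun v => c * x v) = c * tvJ E x := by
  rw [tvJ, tvJ, Finset.mul_sum]
  apply Finset.sum_congr rfl
  intro e _
  rw [← mul_sub, abs_mul, abs_of_nonneg hc]

lemma tvJ_const_shift {V : Type*} (E : Finset (V × V)) (x : V → ℝ) (d : ℝ) :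
    tvJ E (fun v => x v + d) = tvJ E x := by
  apply Finset.sum_congr rfl
  intro e _
  congr 1
  ring

lemma hasDerivAt_comp_eval {V : Type*} [Fintype V] {u : ℝ → V → ℝ} {c : V → ℝ} {t : ℝ}
    (h : HasDerivAt u c t) (v : V) : HasDerivAt (fun s => u s v) (c v) t := by
  have h2 := hasFDerivAt_pi'.1 h.hasFDerivAt v
  simpa using h2.hasDerivAt

lemma mono_ae_deriv_ge {g : ℝ → ℝ} (hg : Monotone g) {a b m : ℝ} (hab : a ≤ b) (hm : 0 ≤ m)
    (hbr : Function.rightLim g b = g b)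
    (hd : ∀ᵐ x ∂(volume : Measure ℝ), x ∈ Set.Ioo a b → ∃ d, HasDerivAt g d x ∧ m ≤ d) :
    m * (b - a) ≤ g b - g a := by
  set μ := hg.stieltjesFunction.measure with hμ
  have key : ∀ᵐ x ∂(volume : Measure ℝ), x ∈ Set.Ioo a b →
      ENNReal.ofReal m ≤ μ.rnDeriv volume x := by
    filter_upwards [hd, hg.ae_hasDerivAt, Measure.rnDeriv_lt_top μ volume] with x h1 h2 h3 hx
    obtain ⟨d, hd1, hd2⟩ := h1 hx
    have hde : d = (μ.rnDeriv volume x).toReal := hd1.unique h2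
    calc ENNReal.ofReal m ≤ ENNReal.ofReal (μ.rnDeriv volume x).toReal :=
          ENNReal.ofReal_le_ofReal (hde ▸ hd2)
      _ = μ.rnDeriv volume x := ENNReal.ofReal_toReal h3.ne
  have h1 : ENNReal.ofReal m * volume (Set.Ioo a b) ≤ ∫⁻ x in Set.Ioo a b, μ.rnDeriv volume x := by
    rw [← setLIntegral_const]
    exact setLIntegral_mono_ae (Measure.measurable_rnDeriv μ volume).aemeasurable
      (by filter_upwards [key] with x hx hmem using hx hmem)
  have h2 : ∫⁻ x in Set.Ioo a b, μ.rnDeriv volume x ≤ μ (Set.Ioo a b) := by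
    rw [← withDensity_apply _ measurableSet_Ioo]
    exact Measure.le_iff'.1 (Measure.withDensity_rnDeriv_le μ volume) _
  have h3 : μ (Set.Ioc a b) = ENNReal.ofReal (hg.stieltjesFunction b - hg.stieltjesFunction a) :=
    StieltjesFunction.measure_Ioc _ a b
  have hGb : hg.stieltjesFunction b = g b := by rw [hg.stieltjesFunction_eq]; exact hbr
  have hGa : g a ≤ hg.stieltjesFunction a := by
    rw [hg.stieltjesFunction_eq]; exact hg.le_rightLim le_rfl
  have hofReal : ENNReal.ofReal (m * (b - a)) ≤ ENNReal.ofReal (g b - g a) := by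
    rw [ENNReal.ofReal_mul hm]
    calc ENNReal.ofReal m * ENNReal.ofReal (b - a)
        = ENNReal.ofReal m * volume (Set.Ioo a b) := by rw [Real.volume_Ioo]
      _ ≤ μ (Set.Ioo a b) := h1.trans h2
      _ ≤ μ (Set.Ioc a b) := measure_mono Set.Ioo_subset_Ioc_self
      _ = ENNReal.ofReal (hg.stieltjesFunction b - hg.stieltjesFunction a) := h3
      _ ≤ ENNReal.ofReal (g b - g a) := ENNReal.ofReal_le_ofReal (by rw [hGb]; linarith)
  have hgba : 0 ≤ g b - g a := sub_nonneg.2 (hg hab)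
  exact (ENNReal.ofReal_le_ofReal_iff hgba).1 hofReal

lemma lip_ae_deriv_integrate {φ : ℝ → ℝ} {K M b : ℝ} (hb : 0 ≤ b) (_hK : 0 ≤ K)
    (hlip : ∀ s t : ℝ, 0 ≤ s → s ≤ t → t ≤ b → φ t - φ s ≤ K * (t - s))
    (hd : ∀ᵐ t ∂(volume : Measure ℝ), t ∈ Set.Ioo 0 b → ∃ d, HasDerivAt φ d t ∧ d ≤ M) :
    φ b ≤ φ 0 + M * b := by
  set c : ℝ → ℝ := fun t => max 0 (min t b) with hc
  have hc0 : c 0 = 0 := by simp [hc, min_eq_left hb]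
  have hcb : c b = b := by simp [hc, hb]
  have hc_mem : ∀ t, 0 ≤ c t ∧ c t ≤ b := fun t => ⟨le_max_left _ _, max_le hb (min_le_right _ _)⟩
  have hc_mono : Monotone c := fun s t hst =>
    max_le_max le_rfl (min_le_min_right _ hst)
  set ψ : ℝ → ℝ := fun t => K * c t - φ (c t) with hψ
  have hψm : Monotone ψ := by
    intro s t hst
    have h1 := hc_mono hst
    have h2 := hlip (c s) (c t) (hc_mem s).1 h1 (hc_mem t).2
    simp only [hψ]
    nlinarith
  have hconst : ∀ t, b ≤ t → ψ t = ψ b := by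
    intro t ht
    have h : c t = c b := by simp [hc, min_eq_right ht, hb]
    simp [hψ, h]
  have hbr : Function.rightLim ψ b = ψ b := by
    refine rightLim_eq_of_tendsto (h := nhdsGT_neBot b) ?_
    refine Filter.Tendsto.congr' ?_ tendsto_const_nhds
    filter_upwards [self_mem_nhdsWithin] with t ht
    exact (hconst t (le_of_lt ht)).symm
  rcases le_or_gt K M with hKM | hMK
  · have h0b := hψm hb
    simp only [hψ, hc0, hcb] at h0b
    nlinarith
  · have hm : 0 ≤ K - M := by linarith
    have hd' : ∀ᵐ x ∂(volume : Measure ℝ), x ∈ Set.Ioo 0 b →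
        ∃ d, HasDerivAt ψ d x ∧ K - M ≤ d := by
      filter_upwards [hd] with x hx hmem
      obtain ⟨d, h1, h2⟩ := hx hmem
      refine ⟨K - d, ?_, by linarith⟩
      have hder : HasDerivAt (fun t => K * t - φ t) (K - d) x := by
        exact (((hasDerivAt_id' x).const_mul K).sub h1).congr_deriv (by ring)
      apply hder.congr_of_eventuallyEq
      filter_upwards [Ioo_mem_nhds hmem.1 hmem.2] with t ht
      have hct : c t = t := by
        simp [hc, min_eq_left ht.2.le, max_eq_right ht.1.le]
      simp [hψ, hct]
    have hfin := mono_ae_deriv_ge hψm hb hm hbr hd'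
    simp only [hψ, hc0, hcb] at hfin
    nlinarith

/-- `‖f̄‖₂ ≤ ‖u_α‖₂ ≤ ‖u(α)‖₂ ≤ ‖f‖₂` for every `α > 0`. -/
theorem rof_flow_norm_comparison
    {V : Type*} [Fintype V] [DecidableEq V] [Nonempty V] (E : Finset (V × V))
    (hE : ∀ v w : V, (v, w) ∈ E → (w, v) ∉ E)
    (hconn : (SimpleGraph.fromRel (fun v w : V => (v, w) ∈ E)).Connected)
    (f : V → ℝ) (u : ℝ → V → ℝ) (hu : IsTVFlowSolution E f u)
    (α : ℝ) (hα : 0 < α) (uα : V → ℝ) (huα : IsROFMinimizer E f α uα) :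
    norm2 (fun _ : V => (1 / (Fintype.card V : ℝ)) * ∑ w, f w) ≤ norm2 uα ∧
      norm2 uα ≤ norm2 (u α) ∧ norm2 (u α) ≤ norm2 f := by
  obtain ⟨hu0, ⟨L, hL⟩, u', hae⟩ := hu
  set n : ℝ := (Fintype.card V : ℝ) with hn_def
  have hn : 0 < n := by
    rw [hn_def]; exact_mod_cast Fintype.card_pos
  -- component Lipschitz bound
  have hLcomp : ∀ v : V, ∀ s t : ℝ, 0 ≤ s → 0 ≤ t → |u t v - u s v| ≤ (L:ℝ) * |t - s| := by
    intro v s t hs ht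
    have h1 : dist (u t v) (u s v) ≤ dist (u t) (u s) := dist_le_pi_dist (u t) (u s) v
    have h2 := hL.dist_le_mul t (Set.mem_Ici.2 ht) s (Set.mem_Ici.2 hs)
    calc |u t v - u s v| = dist (u t v) (u s v) := (Real.dist_eq _ _).symm
      _ ≤ dist (u t) (u s) := h1
      _ ≤ (L:ℝ) * dist t s := h2
      _ = (L:ℝ) * |t - s| := by rw [Real.dist_eq]
  -- uniform bound on [0, α]
  set C : ℝ := (∑ w, |f w|) + (L:ℝ) * α with hC_def
  have hC0 : 0 ≤ C := add_nonneg (Finset.sum_nonneg fun _ _ => abs_nonneg _)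
    (mul_nonneg L.2 hα.le)
  have hB : ∀ v : V, ∀ t : ℝ, 0 ≤ t → t ≤ α → |u t v| ≤ C := by
    intro v t h0 h1
    have h2 := hLcomp v 0 t le_rfl h0
    simp only [hu0] at h2
    have h3 : |f v| ≤ ∑ w, |f w| :=
      Finset.single_le_sum (fun w _ => abs_nonneg (f w)) (Finset.mem_univ v)
    have h4 : |t - 0| = t := by rw [sub_zero, abs_of_nonneg h0]
    rw [h4] at h2
    have h5 : (L:ℝ) * t ≤ (L:ℝ) * α := mul_le_mul_of_nonneg_left h1 L.2
    have h6 : |u t v| - |f v| ≤ |u t v - f v| := abs_sub_abs_le_abs_sub _ _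
    rw [hC_def]
    linarith
  -- Part 1: the mean of uα equals the mean of f
  have hJcs : ∀ (x : V → ℝ) (d : ℝ), tvJ E (fun v => x v + d) = tvJ E x :=
    fun x d => tvJ_const_shift E x d
  have hS : ∑ v, uα v = ∑ v, f v := by
    set S := ∑ v, (f v - uα v) with hSdef
    have hgen : ∀ c : ℝ, 0 ≤ -(2 * c * S) + n * c ^ 2 := by
      intro c
      have h := huα (fun v => uα v + c)
      rw [hJcs uα c] at h
      have hexp : ∑ v, (f v - (uα v + c)) ^ 2
          = (∑ v, (f v - uα v) ^ 2) - 2 * c * S + n * c ^ 2 := by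
        have e : ∀ v ∈ Finset.univ, (f v - (uα v + c)) ^ 2
            = (f v - uα v) ^ 2 - 2 * c * (f v - uα v) + c ^ 2 := fun v _ => by ring
        rw [Finset.sum_congr rfl e, Finset.sum_add_distrib, Finset.sum_sub_distrib,
          ← Finset.mul_sum, ← hSdef, Finset.sum_const, Finset.card_univ, nsmul_eq_mul]
      rw [hexp] at h
      linarith
    have hq := hgen (S / n)
    have he : -(2 * (S / n) * S) + n * (S / n) ^ 2 = -(S ^ 2 / n) := by
      field_simp
      ring
    have hq2 : S ^ 2 / n ≤ 0 := by rw [he] at hq; linarith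
    have hq3 : S ^ 2 ≤ 0 := by
      calc S ^ 2 = n * (S ^ 2 / n) := by field_simp
        _ ≤ n * 0 := mul_le_mul_of_nonneg_left hq2 hn.le
        _ = 0 := mul_zero n
    have hS0 : S = 0 := pow_eq_zero_iff (n := 2) (by norm_num) |>.1
      (le_antisymm hq3 (sq_nonneg S))
    have hfin : (∑ v, f v) - (∑ v, uα v) = 0 := by
      rw [← Finset.sum_sub_distrib]; exact hS0
    linarith
  -- Part 3 squared inequality
  have pow2sum : ∀ g : V → ℝ, ∑ v, g v ^ 2 = ∑ v, g v * g v :=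
    fun g => Finset.sum_congr rfl fun v _ => pow_two (g v)
  have part3sq : (∑ v, (u α v) ^ 2) ≤ ∑ v, (f v) ^ 2 := by
    have hK : (0:ℝ) ≤ (Fintype.card V : ℝ) * (2 * C * (L:ℝ)) := by positivity
    have key := lip_ae_deriv_integrate (φ := fun t => ∑ v, u t v * u t v)
      (K := (Fintype.card V : ℝ) * (2 * C * (L:ℝ))) (M := 0) (b := α) hα.le hK ?_ ?_
    · rw [pow2sum (u α), pow2sum f]
      simp only [hu0] at key
      linarith
    · intro s t hs hst htα
      rw [← Finset.sum_sub_distrib]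
      calc ∑ v, (u t v * u t v - u s v * u s v)
          ≤ ∑ v, (2 * C) * ((L:ℝ) * (t - s)) := by
            apply Finset.sum_le_sum
            intro v _
            have e : u t v * u t v - u s v * u s v = (u t v + u s v) * (u t v - u s v) := by
              ring
            have h1 : |u t v + u s v| ≤ 2 * C := by
              have b1 := hB v t (hs.trans hst) htα
              have b2 := hB v s hs (hst.trans htα)
              have b3 := abs_add_le (u t v) (u s v)
              linarith
            have h2 : |u t v - u s v| ≤ (L:ℝ) * (t - s) := by
              have := hLcomp v s t hs (hs.trans hst)
              rwa [abs_of_nonneg (by linarith : (0:ℝ) ≤ t - s)] at this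
            calc u t v * u t v - u s v * u s v
                ≤ |u t v * u t v - u s v * u s v| := le_abs_self _
              _ = |u t v + u s v| * |u t v - u s v| := by rw [e, abs_mul]
              _ ≤ (2 * C) * ((L:ℝ) * (t - s)) :=
                  mul_le_mul h1 h2 (abs_nonneg _) (by linarith)
        _ = (Fintype.card V : ℝ) * (2 * C * (L:ℝ)) * (t - s) := by
            rw [Finset.sum_const, Finset.card_univ, nsmul_eq_mul]; ring
    · filter_upwards [hae] with t ht hmem
      obtain ⟨hder, hsub⟩ := ht hmem.1
      refine ⟨∑ v, (u' t v * u t v + u t v * u' t v), ?_, ?_⟩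
      · exact HasDerivAt.fun_sum fun v _ =>
          (hasDerivAt_comp_eval hder v).mul (hasDerivAt_comp_eval hder v)
      · have h0 := hsub (fun _ => 0)
        rw [tvJ_zero] at h0
        have e : ∑ v, ((0:ℝ) - u t v) * (-(u' t v)) = ∑ v, u t v * u' t v :=
          Finset.sum_congr rfl fun v _ => by ring
        rw [e] at h0
        have hJt := tvJ_nonneg E (u t)
        have e2 : ∑ v, (u' t v * u t v + u t v * u' t v) = 2 * ∑ v, u t v * u' t v := by
          rw [Finset.mul_sum]
          exact Finset.sum_congr rfl fun v _ => by ring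
        rw [e2]
        linarith
  -- Part 2 setup
  have hJ0 : 0 ≤ tvJ E uα := tvJ_nonneg E uα
  have hB0 : (0:ℝ) ≤ ∑ v, uα v ^ 2 := Finset.sum_nonneg fun v _ => sq_nonneg _
  have step1 : ∀ ε : ℝ, 0 < ε → ε ≤ 1 →
      -(ε / 2) * (∑ v, uα v ^ 2) ≤ (∑ v, (f v - uα v) * uα v) - α * tvJ E uα := by
    intro ε hε hε1
    have h := huα (fun v => (1 - ε) * uα v)
    rw [tvJ_smul E (by linarith : (0:ℝ) ≤ 1 - ε) uα] at h
    have hexp : ∑ v, (f v - (1 - ε) * uα v) ^ 2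
        = (∑ v, (f v - uα v) ^ 2) + 2 * ε * (∑ v, (f v - uα v) * uα v)
          + ε ^ 2 * (∑ v, uα v ^ 2) := by
      have e : ∀ v ∈ Finset.univ, (f v - (1 - ε) * uα v) ^ 2
          = (f v - uα v) ^ 2 + 2 * ε * ((f v - uα v) * uα v) + ε ^ 2 * uα v ^ 2 :=
        fun v _ => by ring
      rw [Finset.sum_congr rfl e, Finset.sum_add_distrib, Finset.sum_add_distrib,
        ← Finset.mul_sum, ← Finset.mul_sum]
    rw [hexp] at h
    have h2 : ε * 0 ≤ ε * (((∑ v, (f v - uα v) * uα v) - α * tvJ E uα)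
        + ε * (∑ v, uα v ^ 2) / 2) := by nlinarith
    have h4 := le_of_mul_le_mul_left h2 hε
    linarith
  have step2 : α * tvJ E uα ≤ ∑ v, (f v - uα v) * uα v := by
    by_contra hcon
    push_neg at hcon
    rcases eq_or_lt_of_le hB0 with hBeq | hBpos
    · have h1 := step1 1 one_pos le_rfl
      rw [← hBeq] at h1
      linarith
    · set ε : ℝ := min 1 ((α * tvJ E uα - ∑ v, (f v - uα v) * uα v) / ∑ v, uα v ^ 2)
        with hε_def
      have hεpos : 0 < ε := lt_min one_pos (div_pos (by linarith) hBpos)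
      have hε1 : ε ≤ 1 := min_le_left _ _
      have h := step1 ε hεpos hε1
      have hεle : ε ≤ (α * tvJ E uα - ∑ v, (f v - uα v) * uα v) / ∑ v, uα v ^ 2 :=
        min_le_right _ _
      have h5 : ε * (∑ v, uα v ^ 2) ≤ α * tvJ E uα - ∑ v, (f v - uα v) * uα v :=
        (le_div_iff₀ hBpos).1 hεle
      nlinarith
  -- Part 2 flow inequality
  have flow2 : (∑ v, f v * uα v) - α * tvJ E uα ≤ ∑ v, u α v * uα v := by
    have hK : (0:ℝ) ≤ (L:ℝ) * ∑ v, |uα v| := by positivity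
    have key := lip_ae_deriv_integrate (φ := fun t => -∑ v, u t v * uα v)
      (K := (L:ℝ) * ∑ v, |uα v|) (M := tvJ E uα) (b := α) hα.le hK ?_ ?_
    · simp only [hu0] at key
      linarith [key]
    · intro s t hs hst htα
      have e : (-∑ v, u t v * uα v) - (-∑ v, u s v * uα v)
          = ∑ v, (u s v - u t v) * uα v := by
        rw [neg_sub_neg, ← Finset.sum_sub_distrib]
        exact Finset.sum_congr rfl fun v _ => by ring
      rw [e]
      calc ∑ v, (u s v - u t v) * uα v
          ≤ ∑ v, ((L:ℝ) * (t - s)) * |uα v| := by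
            apply Finset.sum_le_sum
            intro v _
            have h1 : |u s v - u t v| ≤ (L:ℝ) * (t - s) := by
              have := hLcomp v t s (hs.trans hst) hs
              rwa [abs_of_nonpos (by linarith : s - t ≤ 0), neg_sub] at this
            calc (u s v - u t v) * uα v ≤ |(u s v - u t v) * uα v| := le_abs_self _
              _ = |u s v - u t v| * |uα v| := abs_mul _ _
              _ ≤ ((L:ℝ) * (t - s)) * |uα v| :=
                  mul_le_mul_of_nonneg_right h1 (abs_nonneg _)
        _ = ((L:ℝ) * ∑ v, |uα v|) * (t - s) := by
            rw [← Finset.mul_sum]; ring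
    · filter_upwards [hae] with t ht hmem
      obtain ⟨hder, hsub⟩ := ht hmem.1
      refine ⟨-∑ v, u' t v * uα v, ?_, ?_⟩
      · exact (HasDerivAt.fun_sum fun v _ =>
          (hasDerivAt_comp_eval hder v).mul_const (uα v)).neg
      · have h0 := hsub (fun v => u t v + uα v)
        have e : ∑ v, ((u t v + uα v) - u t v) * (-(u' t v))
            = -∑ v, u' t v * uα v := by
          rw [← Finset.sum_neg_distrib]
          exact Finset.sum_congr rfl fun v _ => by ring
        rw [e] at h0
        have htri := tvJ_add_le E (u t) uα
        linarith
  have hfUα : ∑ v, f v * uα v = (∑ v, (f v - uα v) * uα v) + ∑ v, uα v ^ 2 := by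
    rw [← Finset.sum_add_distrib]
    exact Finset.sum_congr rfl fun v _ => by ring
  have hInner : (∑ v, uα v ^ 2) ≤ ∑ v, u α v * uα v := by linarith
  have part2sq : (∑ v, uα v ^ 2) ≤ ∑ v, u α v ^ 2 := by
    rcases eq_or_lt_of_le hB0 with hBeq | hBpos
    · rw [← hBeq]
      exact Finset.sum_nonneg fun v _ => sq_nonneg _
    · have CS := Finset.sum_mul_sq_le_sq_mul_sq Finset.univ uα (u α)
      have hcomm : ∑ v, u α v * uα v = ∑ v, uα v * u α v :=
        Finset.sum_congr rfl fun v _ => mul_comm _ _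
      have h1 : (∑ v, uα v ^ 2) ^ 2 ≤ (∑ v, uα v * u α v) ^ 2 :=
        pow_le_pow_left₀ hB0 (by linarith) 2
      nlinarith [h1.trans CS]
  -- conclusion
  refine ⟨?_, ?_, ?_⟩
  · simp only [norm2]
    apply Real.sqrt_le_sqrt
    have hsum : ∑ _v : V, ((1 / n) * ∑ w, f w) ^ 2 = n * ((1 / n) * ∑ w, f w) ^ 2 := by
      rw [Finset.sum_const, Finset.card_univ, nsmul_eq_mul]
    rw [hsum]
    have e : n * ((1 / n) * ∑ w, f w) ^ 2 = (∑ w, f w) ^ 2 / n := by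
      field_simp
    rw [e, div_le_iff₀ hn]
    have CS := sq_sum_le_card_mul_sum_sq (s := (Finset.univ : Finset V)) (f := uα)
    have hcard : ((Finset.univ : Finset V).card : ℝ) = n := by
      rw [Finset.card_univ, hn_def]
    rw [hS] at CS
    have CS' : (∑ w, f w) ^ 2 ≤ n * ∑ v, uα v ^ 2 := by
      rw [← hcard]
      exact_mod_cast CS
    linarith
  · simp only [norm2]
    exact Real.sqrt_le_sqrt part2sq
  · simp only [norm2]
    exact Real.sqrt_le_sqrt part3sq

end
end

section
/- Let f ∈ ℝ^V, let u_α denote the ROF minimizer and let u be a TV flow solution, both with datum f, and let α > 0. If ⟨−u′(t), u(α)⟩ = J(u(α)) for almost every t ∈ (0, α), then u(α) = u_α. -/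
open Finset MeasureTheory

noncomputable section

open Set Filter in
lemma lipschitz_ae_deriv_nonneg_le {g g' : ℝ → ℝ} {a b : ℝ} (hab : a ≤ b) {C : ℝ}
    (hlip : ∀ s ∈ Icc a b, ∀ t ∈ Icc a b, |g s - g t| ≤ C * |s - t|)
    (hae : ∀ᵐ t ∂(volume : Measure ℝ), t ∈ Ioo a b → HasDerivAt g (g' t) t ∧ 0 ≤ g' t) :
    g a ≤ g b := by
  rcases eq_or_lt_of_le hab with rfl | hlt
  · exact le_refl _
  have hC : 0 ≤ C := by
    have h1 := hlip a (left_mem_Icc.2 hab) b (right_mem_Icc.2 hab)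
    have h2 : |a - b| = b - a := by rw [abs_sub_comm]; exact abs_of_pos (sub_pos.2 hlt)
    rw [h2] at h1
    nlinarith [abs_nonneg (g a - g b)]
  have main : ∀ ε : ℝ, 0 < ε → g a ≤ g b + (C + 1) * ε + ε * (b - a) := by
    intro ε hε
    set bad : Set ℝ := {t | ¬ (t ∈ Ioo a b → HasDerivAt g (g' t) t ∧ 0 ≤ g' t)} with hbad
    have hbad0 : volume bad = 0 := ae_iff.1 hae
    have hN0 : volume (bad ∪ {a}) = 0 := measure_union_null hbad0 Real.volume_singleton
    obtain ⟨U, hUsup, hUopen, hUmeas⟩ :=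
      Set.exists_isOpen_lt_of_lt (bad ∪ {a}) (ENNReal.ofReal ε)
        (by rw [hN0]; exact ENNReal.ofReal_pos.2 hε)
    have hUfin : volume U ≠ ⊤ := (hUmeas.trans ENNReal.ofReal_lt_top).ne
    set M : ℝ → ℝ := fun t => (volume (U ∩ Ioc a t)).toReal with hM
    have hfin : ∀ t, volume (U ∩ Ioc a t) ≠ ⊤ := fun t =>
      ((measure_mono Set.inter_subset_left).trans_lt (lt_top_iff_ne_top.2 hUfin)).ne
    have hMmono : ∀ ⦃s t : ℝ⦄, s ≤ t → M s ≤ M t := by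
      intro s t hst
      exact ENNReal.toReal_mono (hfin t)
        (measure_mono (Set.inter_subset_inter_right _ (Set.Ioc_subset_Ioc_right hst)))
    have hMjump : ∀ ⦃s t : ℝ⦄, a ≤ s → s ≤ t → Ioc s t ⊆ U → M s + (t - s) ≤ M t := by
      intro s t has hst hsU
      have hdisj : Disjoint (U ∩ Ioc a s) (Ioc s t) := by
        refine Set.disjoint_left.2 ?_
        rintro x ⟨-, -, hxs⟩ ⟨hsx, -⟩
        exact absurd hxs (not_le.2 hsx)
      have hunion : (U ∩ Ioc a s) ∪ Ioc s t ⊆ U ∩ Ioc a t := by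
        rintro x (⟨hxU, hxa, hxs⟩ | ⟨hsx, hxt⟩)
        · exact ⟨hxU, hxa, hxs.trans hst⟩
        · exact ⟨hsU ⟨hsx, hxt⟩, ⟨has.trans_lt hsx, hxt⟩⟩
      have hle : volume (U ∩ Ioc a s) + volume (Ioc s t) ≤ volume (U ∩ Ioc a t) := by
        rw [← measure_union hdisj measurableSet_Ioc]
        exact measure_mono hunion
      have h2 := ENNReal.toReal_mono (hfin t) hle
      rwa [ENNReal.toReal_add (hfin s) (by rw [Real.volume_Ioc]; exact ENNReal.ofReal_ne_top),
        Real.volume_Ioc, ENNReal.toReal_ofReal (sub_nonneg.2 hst)] at h2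
    have hMlip : ∀ ⦃s t : ℝ⦄, s ≤ t → M t ≤ M s + (t - s) := by
      intro s t hst
      have hsub : U ∩ Ioc a t ⊆ (U ∩ Ioc a s) ∪ Ioc s t := by
        rintro x ⟨hxU, hxa, hxt⟩
        rcases le_or_gt x s with h | h
        · exact Or.inl ⟨hxU, hxa, h⟩
        · exact Or.inr ⟨h, hxt⟩
      have hle : volume (U ∩ Ioc a t) ≤ volume (U ∩ Ioc a s) + volume (Ioc s t) :=
        (measure_mono hsub).trans (measure_union_le _ _)
      have h2 : M t ≤ (volume (U ∩ Ioc a s) + volume (Ioc s t)).toReal :=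
        ENNReal.toReal_mono (by
          rw [ENNReal.add_ne_top]
          exact ⟨hfin s, by rw [Real.volume_Ioc]; exact ENNReal.ofReal_ne_top⟩) hle
      rwa [ENNReal.toReal_add (hfin s) (by rw [Real.volume_Ioc]; exact ENNReal.ofReal_ne_top),
        Real.volume_Ioc, ENNReal.toReal_ofReal (sub_nonneg.2 hst)] at h2
    have hMcont : Continuous M := by
      have key : ∀ s t : ℝ, s ≤ t → |M t - M s| ≤ |t - s| := by
        intro s t h
        rw [abs_of_nonneg (sub_nonneg.2 (hMmono h)), abs_of_nonneg (sub_nonneg.2 h)]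
        linarith [hMlip h]
      refine (LipschitzWith.of_dist_le_mul (K := 1) fun s t => ?_).continuous
      rw [NNReal.coe_one, one_mul, Real.dist_eq, Real.dist_eq]
      rcases le_total s t with h | h
      · rw [abs_sub_comm (M s), abs_sub_comm s]; exact key s t h
      · exact key t s h
    have hgc : ContinuousOn g (Icc a b) := by
      refine (LipschitzOnWith.of_dist_le_mul (K := C.toNNReal) fun s hs t ht => ?_).continuousOn
      rw [Real.dist_eq, Real.dist_eq, Real.coe_toNNReal _ hC]
      exact hlip s hs t ht
    set F : ℝ → ℝ := fun t => g t + ((C + 1) * M t + ε * (t - a)) with hF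
    have hFc : ContinuousOn F (Icc a b) :=
      hgc.add (((continuous_const.mul hMcont).add
        (continuous_const.mul (continuous_id.sub continuous_const))).continuousOn)
    set s : Set ℝ := F ⁻¹' (Ici (g a)) with hs
    have hs_closed : IsClosed (s ∩ Icc a b) := by
      rw [Set.inter_comm]
      exact hFc.preimage_isClosed_of_isClosed isClosed_Icc isClosed_Ici
    have ha_s : a ∈ s := by
      simp only [hs, Set.mem_preimage, Set.mem_Ici, hF]
      simp [hM]
    have hgt : ∀ x ∈ s ∩ Ico a b, ∀ y ∈ Ioi x, (s ∩ Ioc x y).Nonempty := by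
      rintro t ⟨hts, hta, htb⟩ y (hy : t < y)
      have htF : g a ≤ F t := hts
      by_cases htU : t ∈ U
      · obtain ⟨δ, hδ, hball⟩ := Metric.isOpen_iff.1 hUopen t htU
        set z := min y (min b (t + δ/2)) with hz
        have htz : t < z := lt_min hy (lt_min htb (by linarith))
        have hzy : z ≤ y := min_le_left _ _
        have hzb : z ≤ b := (min_le_right _ _).trans (min_le_left _ _)
        have hzδ : z ≤ t + δ/2 := (min_le_right _ _).trans (min_le_right _ _)
        have hIocU : Ioc t z ⊆ U := by
          rintro x ⟨h1, h2⟩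
          apply hball
          rw [Real.ball_eq_Ioo]
          constructor <;> [linarith; linarith]
        have hMz := hMjump hta htz.le hIocU
        have hgz := hlip t ⟨hta, htb.le⟩ z ⟨hta.trans htz.le, hzb⟩
        have habs : |t - z| = z - t := by
          rw [abs_sub_comm]; exact abs_of_pos (sub_pos.2 htz)
        rw [habs] at hgz
        have h1 : g t - g z ≤ C * (z - t) := (le_abs_self _).trans hgz
        refine ⟨z, ?_, htz, hzy⟩
        show g a ≤ F z
        refine htF.trans ?_
        simp only [hF]
        have h2 : (C + 1) * (M t + (z - t)) ≤ (C + 1) * M z :=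
          mul_le_mul_of_nonneg_left hMz (by linarith)
        nlinarith
      · have htnb : t ∉ bad ∪ {a} := fun h => htU (hUsup h)
        have hta' : a < t := by
          rcases eq_or_lt_of_le hta with rfl | h
          · exact absurd (Or.inr rfl) htnb
          · exact h
        have h1 : t ∉ bad := fun h => htnb (Or.inl h)
        simp only [hbad, Set.mem_setOf_eq, not_not] at h1
        obtain ⟨hder, hpos⟩ := h1 ⟨hta', htb⟩
        have hslope : ∀ᶠ z in nhdsWithin t (Ioi t), -ε < slope g t z := by
          have h1 : Tendsto (slope g t) (nhdsWithin t {t}ᶜ) (nhds (g' t)) :=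
            hasDerivAt_iff_tendsto_slope.1 hder
          have h2 : ∀ᶠ z in nhdsWithin t {t}ᶜ, -ε < slope g t z :=
            h1.eventually (eventually_gt_nhds (by linarith))
          exact h2.filter_mono (nhdsWithin_mono t fun x hx => ne_of_gt hx)
        have hmem : Ioc t (min y b) ∈ nhdsWithin t (Ioi t) :=
          Ioc_mem_nhdsGT (lt_min hy htb)
        obtain ⟨z, hz1, hz2⟩ := (hslope.and (eventually_of_mem hmem fun x hx => hx)).exists
        have htz : t < z := hz2.1
        have hzy : z ≤ y := hz2.2.trans (min_le_left _ _)
        have hzb : z ≤ b := hz2.2.trans (min_le_right _ _)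
        have hgz : -(ε * (z - t)) < g z - g t := by
          rw [slope_def_field] at hz1
          have h4 := (lt_div_iff₀ (sub_pos.2 htz)).1 hz1
          linarith
        refine ⟨z, ?_, htz, hzy⟩
        show g a ≤ F z
        refine htF.trans ?_
        simp only [hF]
        have h2 : (0:ℝ) ≤ (C + 1) * (M z - M t) :=
          mul_nonneg (by linarith) (by linarith [hMmono htz.le])
        nlinarith
    have hfinal : b ∈ s :=
      IsClosed.Icc_subset_of_forall_exists_gt hs_closed ha_s hgt (right_mem_Icc.2 hab)
    have hFb : g a ≤ F b := hfinal
    have hMb : M b ≤ ε :=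
      (ENNReal.toReal_lt_of_lt_ofReal
        ((measure_mono Set.inter_subset_left).trans_lt hUmeas)).le
    have h2 : (C + 1) * M b ≤ (C + 1) * ε := mul_le_mul_of_nonneg_left hMb (by linarith)
    simp only [hF] at hFb
    linarith
  by_contra hcon
  push_neg at hcon
  set K : ℝ := C + 1 + (b - a) with hK
  have hKpos : 0 < K := by simp only [hK]; linarith
  set ε : ℝ := (g a - g b) / (2 * K) with hε
  have hεpos : 0 < ε := div_pos (by linarith) (by linarith)
  have h1 := main ε hεpos
  have h2 : (C + 1) * ε + ε * (b - a) = ε * K := by simp only [hK]; ring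
  have h3 : ε * K = (g a - g b) / 2 := by
    simp only [hε]
    field_simp
  linarith

/-- if `⟨-u'(t), u(α)⟩ = J(u(α))` for a.e. `t ∈ (0,α)`, then `u(α) = u_α`. -/
theorem flow_eq_rof_of_inner_condition
    {V : Type*} [Fintype V] [DecidableEq V] [Nonempty V] (E : Finset (V × V))
    (hE : ∀ v w : V, (v, w) ∈ E → (w, v) ∉ E)
    (hconn : (SimpleGraph.fromRel (fun v w : V => (v, w) ∈ E)).Connected)
    (f : V → ℝ) (α : ℝ) (hα : 0 < α)
    (uα : V → ℝ) (huα : IsROFMinimizer E f α uα)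
    (u u' : ℝ → V → ℝ) (hu0 : u 0 = f)
    (hLip : ∃ L : NNReal, LipschitzOnWith L u (Set.Ici 0))
    (hflow : ∀ᵐ t ∂(volume : Measure ℝ), 0 < t →
      HasDerivAt u (u' t) t ∧ (fun v => -(u' t v)) ∈ subdiffJ E (u t))
    (hcond : ∀ᵐ t ∂(volume : Measure ℝ), t ∈ Set.Ioo (0 : ℝ) α →
      ∑ v, (-(u' t v)) * u α v = tvJ E (u α)) :
    u α = uα := by
  classical
  obtain ⟨L, hL⟩ := hLip
  -- Step A : the subgradient inequality for `u α`
  have hsub : ∀ h : V → ℝ,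
      (∑ v, (h v - u α v) * (f v - u α v)) + α * tvJ E (u α) ≤ α * tvJ E h := by
    intro h
    set c : V → ℝ := fun v => h v - u α v with hc
    set D : ℝ := tvJ E h - tvJ E (u α) with hD
    set g : ℝ → ℝ := fun t => (∑ v, c v * u t v) + t * D with hg
    set g' : ℝ → ℝ := fun t => (∑ v, c v * u' t v) + D with hg'
    have hlipg : ∀ s ∈ Set.Icc (0:ℝ) α, ∀ t ∈ Set.Icc (0:ℝ) α,
        |g s - g t| ≤ ((∑ v, |c v|) * L + |D|) * |s - t| := by
      intro s hs t ht
      have h1 : g s - g t = (∑ v, c v * (u s v - u t v)) + (s - t) * D := by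
        simp only [hg]
        rw [show (∑ v, c v * (u s v - u t v)) = (∑ v, c v * u s v) - ∑ v, c v * u t v by
          rw [← Finset.sum_sub_distrib]; exact Finset.sum_congr rfl fun v _ => by ring]
        ring
      rw [h1]
      have h2 : ∀ v : V, |u s v - u t v| ≤ (L : ℝ) * |s - t| := by
        intro v
        calc |u s v - u t v| = dist (u s v) (u t v) := (Real.dist_eq _ _).symm
          _ ≤ dist (u s) (u t) := dist_le_pi_dist (u s) (u t) v
          _ ≤ L * dist s t := hL.dist_le_mul s hs.1 t ht.1
          _ = L * |s - t| := by rw [Real.dist_eq]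
      calc |(∑ v, c v * (u s v - u t v)) + (s - t) * D|
          ≤ |∑ v, c v * (u s v - u t v)| + |(s - t) * D| := abs_add_le _ _
        _ ≤ (∑ v, |c v * (u s v - u t v)|) + |s - t| * |D| := by
            exact add_le_add (Finset.abs_sum_le_sum_abs _ _) (le_of_eq (abs_mul _ _))
        _ ≤ (∑ v, |c v| * ((L : ℝ) * |s - t|)) + |s - t| * |D| := by
            refine add_le_add (Finset.sum_le_sum fun v _ => ?_) le_rfl
            rw [abs_mul]
            exact mul_le_mul_of_nonneg_left (h2 v) (abs_nonneg _)
        _ = ((∑ v, |c v|) * L + |D|) * |s - t| := by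
            rw [← Finset.sum_mul]; ring
    have hae : ∀ᵐ t ∂(volume : Measure ℝ), t ∈ Set.Ioo (0:ℝ) α →
        HasDerivAt g (g' t) t ∧ 0 ≤ g' t := by
      filter_upwards [hflow, hcond] with t ht1 ht2 htIoo
      obtain ⟨hder, hsubd⟩ := ht1 htIoo.1
      have hinner := ht2 htIoo
      constructor
      · have hsum : HasDerivAt (fun s => ∑ v, c v * u s v) (∑ v, c v * u' t v) t := by
          refine HasDerivAt.fun_sum fun v _ => ?_
          have hv : HasDerivAt (fun s => u s v) (u' t v) t := by
            have := (ContinuousLinearMap.proj (R := ℝ) (φ := fun _ : V => ℝ)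
              v).hasFDerivAt.comp_hasDerivAt t hder
            exact this
          exact hv.const_mul (c v)
        exact hsum.add (hasDerivAt_mul_const D)
      · set us : V → ℝ := fun v => -(u' t v) with hus
        have e0 := hsubd 0
        have e2 := hsubd (fun v => 2 * u t v)
        have eh := hsubd h
        have hJ0 : tvJ E (0 : V → ℝ) = 0 := by simp [tvJ]
        have hJ2 : tvJ E (fun v => 2 * u t v) = 2 * tvJ E (u t) := by
          simp only [tvJ, Finset.mul_sum]
          exact Finset.sum_congr rfl fun e _ => by
            rw [show 2 * u t e.2 - 2 * u t e.1 = 2 * (u t e.2 - u t e.1) by ring,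
              abs_mul, abs_two]
        have s0 : (∑ v, ((0:V→ℝ) v - u t v) * us v) = -∑ v, u t v * us v := by
          rw [← Finset.sum_neg_distrib]
          exact Finset.sum_congr rfl fun v _ => by simp only [Pi.zero_apply]; ring
        have s2 : (∑ v, ((fun v => 2 * u t v) v - u t v) * us v) = ∑ v, u t v * us v :=
          Finset.sum_congr rfl fun v _ => by ring
        rw [hJ0, s0] at e0
        rw [hJ2, s2] at e2
        have heq : ∑ v, u t v * us v = tvJ E (u t) := by linarith
        have sh : (∑ v, (h v - u t v) * us v)
            = (∑ v, h v * us v) - ∑ v, u t v * us v := by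
          rw [← Finset.sum_sub_distrib]
          exact Finset.sum_congr rfl fun v _ => by ring
        rw [sh, heq] at eh
        have hh : (∑ v, h v * us v) ≤ tvJ E h := by linarith
        have hA : (∑ v, u α v * us v) = tvJ E (u α) := by
          rw [← hinner]
          exact Finset.sum_congr rfl fun v _ => mul_comm (u α v) (us v)
        have hsplit : (∑ v, c v * u' t v)
            = (∑ v, u α v * us v) - (∑ v, h v * us v) := by
          rw [← Finset.sum_sub_distrib]
          exact Finset.sum_congr rfl fun v _ => by simp only [hus, hc]; ring
        show 0 ≤ g' t
        simp only [hg']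
        rw [hsplit, hA]
        simp only [hD]
        linarith
    have hkey := lipschitz_ae_deriv_nonneg_le hα.le hlipg hae
    have hg0 : g 0 = ∑ v, c v * f v := by simp [hg, hu0]
    have hgα : g α = (∑ v, c v * u α v) + α * D := by simp [hg]
    rw [hg0, hgα] at hkey
    have hsplit2 : (∑ v, c v * (f v - u α v))
        = (∑ v, c v * f v) - ∑ v, c v * u α v := by
      rw [← Finset.sum_sub_distrib]
      exact Finset.sum_congr rfl fun v _ => by ring
    have hαD : α * D = α * tvJ E h - α * tvJ E (u α) := by rw [hD]; ring
    have hgoal : (∑ v, c v * (f v - u α v)) + α * tvJ E (u α) ≤ α * tvJ E h := by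
      rw [hsplit2]; linarith
    exact hgoal
  -- Step B : `u α` is a ROF minimizer
  have hmin : IsROFMinimizer E f α (u α) := by
    intro w
    have h1 := hsub w
    have h2 : (∑ v, (f v - w v)^2) = (∑ v, (f v - u α v)^2)
        - 2 * (∑ v, (w v - u α v) * (f v - u α v)) + ∑ v, (w v - u α v)^2 := by
      rw [Finset.sum_congr rfl (fun v _ => (by ring :
        (f v - w v)^2 = ((f v - u α v)^2 - 2 * ((w v - u α v) * (f v - u α v))
          + (w v - u α v)^2)))]
      rw [Finset.sum_add_distrib, Finset.sum_sub_distrib, ← Finset.mul_sum]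
    have h3 : (0:ℝ) ≤ ∑ v, (w v - u α v)^2 := Finset.sum_nonneg fun v _ => sq_nonneg _
    linarith
  -- Step C : uniqueness of the minimizer
  set m : V → ℝ := fun v => (u α v + uα v) / 2 with hm
  have hJm : 2 * tvJ E m ≤ tvJ E (u α) + tvJ E uα := by
    have hedge : ∀ e ∈ E, 2 * |m e.2 - m e.1|
        ≤ |u α e.2 - u α e.1| + |uα e.2 - uα e.1| := by
      intro e _
      have h1 : 2 * (m e.2 - m e.1) = (u α e.2 - u α e.1) + (uα e.2 - uα e.1) := by
        simp only [hm]; ring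
      calc 2 * |m e.2 - m e.1| = |2 * (m e.2 - m e.1)| := by rw [abs_mul, abs_two]
        _ = |(u α e.2 - u α e.1) + (uα e.2 - uα e.1)| := by rw [h1]
        _ ≤ _ := abs_add_le _ _
    calc 2 * tvJ E m = ∑ e ∈ E, 2 * |m e.2 - m e.1| := by rw [tvJ, Finset.mul_sum]
      _ ≤ ∑ e ∈ E, (|u α e.2 - u α e.1| + |uα e.2 - uα e.1|) := Finset.sum_le_sum hedge
      _ = tvJ E (u α) + tvJ E uα := by rw [Finset.sum_add_distrib]; rfl
  have hqs : (∑ v, (f v - m v)^2) = ((∑ v, (f v - u α v)^2)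
      + ∑ v, (f v - uα v)^2) / 2 - (∑ v, (u α v - uα v)^2) / 4 := by
    rw [Finset.sum_congr rfl (fun v _ => (by simp only [hm]; ring :
      (f v - m v)^2 = ((f v - u α v)^2 + (f v - uα v)^2) / 2 - ((u α v - uα v)^2) / 4))]
    rw [Finset.sum_sub_distrib, ← Finset.sum_div, ← Finset.sum_div, Finset.sum_add_distrib]
  have h1 := hmin m
  have h2 := huα m
  have h4 := mul_le_mul_of_nonneg_left hJm hα.le
  have h3 : (∑ v, (u α v - uα v)^2) ≤ 0 := by linarith
  have h6 : ∀ w ∈ Finset.univ, (0:ℝ) ≤ (u α w - uα w)^2 := fun w _ => sq_nonneg _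
  have h7 : (∑ v, (u α v - uα v)^2) = 0 :=
    le_antisymm h3 (Finset.sum_nonneg h6)
  funext v
  have h5 : (u α v - uα v)^2 = 0 :=
    (Finset.sum_eq_zero_iff_of_nonneg h6).1 h7 v (Finset.mem_univ v)
  have h8 : u α v - uα v = 0 := by
    have : u α v - uα v = 0 := by
      have h9 := sq_eq_zero_iff.1 h5
      exact h9
    exact this
  linarith
end
end

section
/- Total variation regularization and total variation flow on graphs are not equivalent in general: there exist a finite set V, an oriented edge set E ⊆ V × V with (v,w) ∈ E implying (w,v) ∉ E whose underlying undirected graph is connected, a datum f ∈ ℝ^V, a TV flow solution u with datum f, and a time α > 0 such that u(α) ≠ u_α, where u_α is the ROF minimizer with parameter α and datum f. -/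
open Finset MeasureTheory

noncomputable section

def myE : Finset (Fin 5 × Fin 5) := {(0,1), (1,2), (2,3), (2,4)}
def myf : Fin 5 → ℝ := ![8, 0, 5, -9, -9]
def myu : ℝ → Fin 5 → ℝ := fun t => ![
  max (8 - t) (max (5 - t/2) (-1)),
  min (min (2*t) 2) (max (5 - t/2) (-1)),
  max (max (5 - 3*t) (3 - t)) (min (t/3 - 5) (-1)),
  min (min (t - 9) (t/3 - 5)) (-1),
  min (min (t - 9) (t/3 - 5)) (-1)]
def myu' : ℝ → Fin 5 → ℝ := fun t =>
  if t < 1 then ![-1, 2, -3, 1, 1]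
  else if t < 6 then ![-1, 0, -1, 1, 1]
  else if t < 12 then ![-1/2, -1/2, 1/3, 1/3, 1/3]
  else ![0,0,0,0,0]
def myuα : Fin 5 → ℝ := ![6, 3/2, 3/2, -7, -7]

lemma phase1 (t : ℝ) (h0 : 0 ≤ t) (h1 : t ≤ 1) :
    myu t = ![8 - t, 2*t, 5 - 3*t, t - 9, t - 9] := by
  funext v
  fin_cases v <;> simp [myu, min_def, max_def] <;> split_ifs <;> intros <;> linarith

lemma phase2 (t : ℝ) (h0 : 1 ≤ t) (h1 : t ≤ 6) :
    myu t = ![8 - t, 2, 3 - t, t - 9, t - 9] := by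
  funext v
  fin_cases v <;> simp [myu, min_def, max_def] <;> split_ifs <;> intros <;> linarith

lemma phase3 (t : ℝ) (h0 : 6 ≤ t) (h1 : t ≤ 12) :
    myu t = ![5 - t/2, 5 - t/2, t/3 - 5, t/3 - 5, t/3 - 5] := by
  funext v
  fin_cases v <;> simp [myu, min_def, max_def] <;> split_ifs <;> intros <;> linarith

lemma phase4 (t : ℝ) (h0 : 12 ≤ t) :
    myu t = ![-1, -1, -1, -1, -1] := by
  funext v
  fin_cases v <;> simp [myu, min_def, max_def] <;> split_ifs <;> intros <;> linarith

lemma lin_lip (f : ℝ → ℝ) (a b : ℝ) (hf : ∀ t, f t = a * t + b) (h : |a| ≤ 3) :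
    LipschitzWith 3 f := by
  rw [lipschitzWith_iff_dist_le_mul]
  intro x y
  rw [Real.dist_eq, Real.dist_eq, hf x, hf y]
  have e : a*x+b - (a*y+b) = a*(x-y) := by ring
  rw [e, abs_mul]
  have : ((3:NNReal):ℝ) = 3 := by norm_num
  rw [this]
  exact mul_le_mul_of_nonneg_right h (abs_nonneg _)

lemma myu_lip : LipschitzWith 3 myu := by
  have h1 : LipschitzWith 3 (fun t : ℝ => 8 - t) :=
    lin_lip _ (-1) 8 (fun t => by ring) (by rw [abs_le]; constructor <;> norm_num)
  have h2 : LipschitzWith 3 (fun t : ℝ => 5 - t/2) :=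
    lin_lip _ (-1/2) 5 (fun t => by ring) (by rw [abs_le]; constructor <;> norm_num)
  have h3 : LipschitzWith 3 (fun _ : ℝ => (-1:ℝ)) :=
    lin_lip _ 0 (-1) (fun t => by ring) (by rw [abs_le]; constructor <;> norm_num)
  have h4 : LipschitzWith 3 (fun t : ℝ => 2*t) :=
    lin_lip _ 2 0 (fun t => by ring) (by rw [abs_le]; constructor <;> norm_num)
  have h5 : LipschitzWith 3 (fun _ : ℝ => (2:ℝ)) :=
    lin_lip _ 0 2 (fun t => by ring) (by rw [abs_le]; constructor <;> norm_num)
  have h6 : LipschitzWith 3 (fun t : ℝ => 5 - 3*t) :=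
    lin_lip _ (-3) 5 (fun t => by ring) (by rw [abs_le]; constructor <;> norm_num)
  have h7 : LipschitzWith 3 (fun t : ℝ => 3 - t) :=
    lin_lip _ (-1) 3 (fun t => by ring) (by rw [abs_le]; constructor <;> norm_num)
  have h8 : LipschitzWith 3 (fun t : ℝ => t/3 - 5) :=
    lin_lip _ (1/3) (-5) (fun t => by ring) (by rw [abs_le]; constructor <;> norm_num)
  have h9 : LipschitzWith 3 (fun t : ℝ => t - 9) :=
    lin_lip _ 1 (-9) (fun t => by ring) (by rw [abs_le]; constructor <;> norm_num)
  have c0 : LipschitzWith 3 (fun t : ℝ => max (8 - t) (max (5 - t/2) (-1))) := by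
    simpa using h1.max (h2.max h3)
  have c1 : LipschitzWith 3 (fun t : ℝ => min (min (2*t) 2) (max (5 - t/2) (-1))) := by
    simpa using (h4.min h5).min (h2.max h3)
  have c2 : LipschitzWith 3
      (fun t : ℝ => max (max (5 - 3*t) (3 - t)) (min (t/3 - 5) (-1))) := by
    simpa using (h6.max h7).max (h8.min h3)
  have c3 : LipschitzWith 3 (fun t : ℝ => min (min (t - 9) (t/3 - 5)) (-1)) := by
    simpa using (h9.min h8).min h3
  apply LipschitzWith.of_dist_le_mul
  intro x y
  rw [dist_pi_le_iff (by positivity)]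
  intro i
  fin_cases i
  · exact c0.dist_le_mul x y
  · exact c1.dist_le_mul x y
  · exact c2.dist_le_mul x y
  · exact c3.dist_le_mul x y
  · exact c3.dist_le_mul x y

lemma affine_deriv (a b t : ℝ) : HasDerivAt (fun s : ℝ => a * s + b) a t := by
  simpa using ((hasDerivAt_id t).const_mul a).add_const b

lemma deriv1 (t : ℝ) (h0 : 0 < t) (h1 : t < 1) : HasDerivAt myu (myu' t) t := by
  have hev : ∀ᶠ s in nhds t, s ∈ Set.Ioo (0:ℝ) 1 := isOpen_Ioo.eventually_mem ⟨h0, h1⟩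
  have hev' : ∀ᶠ s in nhds t, myu s = ![8 - s, 2*s, 5 - 3*s, s - 9, s - 9] := by
    filter_upwards [hev] with s hs
    exact phase1 s hs.1.le hs.2.le
  rw [hasDerivAt_pi]
  intro i
  simp only [myu', if_pos h1]
  fin_cases i
  · exact HasDerivAt.congr_of_eventuallyEq (affine_deriv (-1) 8 t)
      (by filter_upwards [hev'] with s hs; rw [hs]; simp; try ring_nf; try linarith)
  · exact HasDerivAt.congr_of_eventuallyEq (affine_deriv 2 0 t)
      (by filter_upwards [hev'] with s hs; rw [hs]; simp; try ring_nf; try linarith)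
  · exact HasDerivAt.congr_of_eventuallyEq (affine_deriv (-3) 5 t)
      (by filter_upwards [hev'] with s hs; rw [hs]; simp; try ring_nf; try linarith)
  · exact HasDerivAt.congr_of_eventuallyEq (affine_deriv 1 (-9) t)
      (by filter_upwards [hev'] with s hs; rw [hs]; simp; try ring_nf; try linarith)
  · exact HasDerivAt.congr_of_eventuallyEq (affine_deriv 1 (-9) t)
      (by filter_upwards [hev'] with s hs; rw [hs]; simp; try ring_nf; try linarith)

lemma deriv2 (t : ℝ) (h0 : 1 < t) (h1 : t < 6) : HasDerivAt myu (myu' t) t := by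
  have hev : ∀ᶠ s in nhds t, s ∈ Set.Ioo (1:ℝ) 6 := isOpen_Ioo.eventually_mem ⟨h0, h1⟩
  have hev' : ∀ᶠ s in nhds t, myu s = ![8 - s, 2, 3 - s, s - 9, s - 9] := by
    filter_upwards [hev] with s hs
    exact phase2 s hs.1.le hs.2.le
  rw [hasDerivAt_pi]
  intro i
  simp only [myu', if_neg (by linarith : ¬ t < 1), if_pos h1]
  fin_cases i
  · exact HasDerivAt.congr_of_eventuallyEq (affine_deriv (-1) 8 t)
      (by filter_upwards [hev'] with s hs; rw [hs]; simp; try ring_nf; try linarith)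
  · exact HasDerivAt.congr_of_eventuallyEq (affine_deriv 0 2 t)
      (by filter_upwards [hev'] with s hs; rw [hs]; simp; try ring_nf; try linarith)
  · exact HasDerivAt.congr_of_eventuallyEq (affine_deriv (-1) 3 t)
      (by filter_upwards [hev'] with s hs; rw [hs]; simp; try ring_nf; try linarith)
  · exact HasDerivAt.congr_of_eventuallyEq (affine_deriv 1 (-9) t)
      (by filter_upwards [hev'] with s hs; rw [hs]; simp; try ring_nf; try linarith)
  · exact HasDerivAt.congr_of_eventuallyEq (affine_deriv 1 (-9) t)
      (by filter_upwards [hev'] with s hs; rw [hs]; simp; try ring_nf; try linarith)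

lemma deriv3 (t : ℝ) (h0 : 6 < t) (h1 : t < 12) : HasDerivAt myu (myu' t) t := by
  have hev : ∀ᶠ s in nhds t, s ∈ Set.Ioo (6:ℝ) 12 := isOpen_Ioo.eventually_mem ⟨h0, h1⟩
  have hev' : ∀ᶠ s in nhds t, myu s = ![5 - s/2, 5 - s/2, s/3 - 5, s/3 - 5, s/3 - 5] := by
    filter_upwards [hev] with s hs
    exact phase3 s hs.1.le hs.2.le
  rw [hasDerivAt_pi]
  intro i
  simp only [myu', if_neg (by linarith : ¬ t < 1), if_neg (by linarith : ¬ t < 6), if_pos h1]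
  fin_cases i
  · exact HasDerivAt.congr_of_eventuallyEq (affine_deriv (-1/2) 5 t)
      (by filter_upwards [hev'] with s hs; rw [hs]; simp; try ring_nf; try linarith)
  · exact HasDerivAt.congr_of_eventuallyEq (affine_deriv (-1/2) 5 t)
      (by filter_upwards [hev'] with s hs; rw [hs]; simp; try ring_nf; try linarith)
  · exact HasDerivAt.congr_of_eventuallyEq (affine_deriv (1/3) (-5) t)
      (by filter_upwards [hev'] with s hs; rw [hs]; simp; try ring_nf; try linarith)
  · exact HasDerivAt.congr_of_eventuallyEq (affine_deriv (1/3) (-5) t)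
      (by filter_upwards [hev'] with s hs; rw [hs]; simp; try ring_nf; try linarith)
  · exact HasDerivAt.congr_of_eventuallyEq (affine_deriv (1/3) (-5) t)
      (by filter_upwards [hev'] with s hs; rw [hs]; simp; try ring_nf; try linarith)

lemma deriv4 (t : ℝ) (h0 : 12 < t) : HasDerivAt myu (myu' t) t := by
  have hev : ∀ᶠ s in nhds t, s ∈ Set.Ioi (12:ℝ) := isOpen_Ioi.eventually_mem h0
  have hev' : ∀ᶠ s in nhds t, myu s = ![-1, -1, -1, -1, -1] := by
    filter_upwards [hev] with s hs
    exact phase4 s (le_of_lt hs)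
  rw [hasDerivAt_pi]
  intro i
  simp only [myu', if_neg (by linarith : ¬ t < 1), if_neg (by linarith : ¬ t < 6),
    if_neg (by linarith : ¬ t < 12)]
  fin_cases i <;>
    exact HasDerivAt.congr_of_eventuallyEq (affine_deriv 0 (-1) t)
      (by filter_upwards [hev'] with s hs; rw [hs]; simp; try ring_nf; try linarith)

lemma gdiv_inner {V : Type*} [Fintype V] [DecidableEq V] (E : Finset (V × V))
    (z : V × V → ℝ) (g : V → ℝ) :
    ∑ v, g v * gdiv E z v = ∑ e ∈ E, z e * (g e.2 - g e.1) := by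
  simp only [gdiv, mul_sub, Finset.mul_sum, Finset.sum_sub_distrib, mul_ite, mul_zero]
  rw [Finset.sum_comm (s := Finset.univ), Finset.sum_comm (s := Finset.univ)]
  congr 1 <;> apply Finset.sum_congr rfl <;> intro e _
  · rw [Finset.sum_ite_eq Finset.univ e.2 (fun v => g v * z e)]
    simp [mul_comm]
  · rw [Finset.sum_ite_eq Finset.univ e.1 (fun v => g v * z e)]
    simp [mul_comm]

lemma mem_subdiffJ_of_gdiv {V : Type*} [Fintype V] [DecidableEq V] (E : Finset (V × V))
    (u : V → ℝ) (z : V × V → ℝ) (hz1 : ∀ e ∈ E, |z e| ≤ 1)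
    (hz2 : ∀ e ∈ E, z e * (u e.2 - u e.1) = |u e.2 - u e.1|) :
    gdiv E z ∈ subdiffJ E u := by
  intro h
  rw [gdiv_inner]
  have h1 : ∑ e ∈ E, z e * ((fun v => h v - u v) e.2 - (fun v => h v - u v) e.1)
      = (∑ e ∈ E, z e * (h e.2 - h e.1)) - tvJ E u := by
    rw [tvJ, ← Finset.sum_sub_distrib]
    apply Finset.sum_congr rfl
    intro e he
    rw [← hz2 e he]; ring
  rw [h1]
  have h2 : ∑ e ∈ E, z e * (h e.2 - h e.1) ≤ tvJ E h := by
    apply Finset.sum_le_sum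
    intro e he
    calc z e * (h e.2 - h e.1) ≤ |z e * (h e.2 - h e.1)| := le_abs_self _
      _ = |z e| * |h e.2 - h e.1| := abs_mul _ _
      _ ≤ 1 * |h e.2 - h e.1| := by
          apply mul_le_mul_of_nonneg_right (hz1 e he) (abs_nonneg _)
      _ = |h e.2 - h e.1| := one_mul _
  linarith

def z1 : Fin 5 × Fin 5 → ℝ := fun e => if e = (1,2) then 1 else -1
def z2 : Fin 5 × Fin 5 → ℝ := fun _ => -1
def z3 : Fin 5 × Fin 5 → ℝ := fun e =>
  if e = (0,1) then -1/2 else if e = (1,2) then -1 else -1/3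
def z4 : Fin 5 × Fin 5 → ℝ := fun _ => 0

lemma sub1 (t : ℝ) (h0 : 0 < t) (h1 : t < 1) :
    (fun v => -(myu' t v)) ∈ subdiffJ myE (myu t) := by
  have hu := phase1 t h0.le h1.le
  apply Set.mem_of_eq_of_mem ?_ (mem_subdiffJ_of_gdiv myE (myu t) z1 ?_ ?_)
  · funext v
    simp only [myu', if_pos h1]
    fin_cases v <;>
      simp [gdiv, myE, z1, Finset.sum_insert, Finset.mem_insert, Finset.mem_singleton,
        Prod.ext_iff] <;> norm_num
  · intro e he
    fin_cases he <;> simp [z1]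
  · intro e he
    fin_cases he <;> rw [hu] <;> simp [z1]
    all_goals first
      | (rw [abs_of_nonpos (by linarith)]; ring)
      | (rw [abs_of_nonneg (by linarith)])
      | (rw [abs_of_nonneg (by linarith)]; ring)

lemma sub2 (t : ℝ) (h0 : 1 < t) (h1 : t < 6) :
    (fun v => -(myu' t v)) ∈ subdiffJ myE (myu t) := by
  have hu := phase2 t h0.le h1.le
  apply Set.mem_of_eq_of_mem ?_ (mem_subdiffJ_of_gdiv myE (myu t) z2 ?_ ?_)
  · funext v
    simp only [myu', if_neg (by linarith : ¬ t < 1), if_pos h1]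
    fin_cases v <;>
      simp [gdiv, myE, z2, Finset.sum_insert, Finset.mem_insert, Finset.mem_singleton,
        Prod.ext_iff] <;> norm_num
  · intro e he
    fin_cases he <;> simp [z2]
  · intro e he
    fin_cases he <;> rw [hu] <;> simp [z2]
    all_goals first
      | (rw [abs_of_nonpos (by linarith)]; ring)
      | (rw [abs_of_nonneg (by linarith)])
      | (rw [abs_of_nonneg (by linarith)]; ring)

lemma sub3 (t : ℝ) (h0 : 6 < t) (h1 : t < 12) :
    (fun v => -(myu' t v)) ∈ subdiffJ myE (myu t) := by
  have hu := phase3 t h0.le h1.le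
  apply Set.mem_of_eq_of_mem ?_ (mem_subdiffJ_of_gdiv myE (myu t) z3 ?_ ?_)
  · funext v
    simp only [myu', if_neg (by linarith : ¬ t < 1), if_neg (by linarith : ¬ t < 6), if_pos h1]
    fin_cases v <;>
      simp [gdiv, myE, z3, Finset.sum_insert, Finset.mem_insert, Finset.mem_singleton,
        Prod.ext_iff] <;> norm_num
  · intro e he
    fin_cases he <;> simp [z3] <;> rw [abs_le] <;> constructor <;> norm_num
  · intro e he
    fin_cases he <;> rw [hu] <;> simp [z3]
    all_goals first
      | (rw [abs_of_nonpos (by linarith)]; ring)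
      | (rw [abs_of_nonneg (by linarith)])
      | (rw [abs_of_nonneg (by linarith)]; ring)

lemma sub4 (t : ℝ) (h0 : 12 < t) :
    (fun v => -(myu' t v)) ∈ subdiffJ myE (myu t) := by
  have hu := phase4 t h0.le
  apply Set.mem_of_eq_of_mem ?_ (mem_subdiffJ_of_gdiv myE (myu t) z4 ?_ ?_)
  · funext v
    simp only [myu', if_neg (by linarith : ¬ t < 1), if_neg (by linarith : ¬ t < 6),
      if_neg (by linarith : ¬ t < 12)]
    fin_cases v <;>
      simp [gdiv, myE, z4, Finset.sum_insert, Finset.mem_insert, Finset.mem_singleton,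
        Prod.ext_iff] <;> norm_num
  · intro e he
    fin_cases he <;> simp [z4]
  · intro e he
    fin_cases he <;> rw [hu] <;> simp [z4]

lemma isROF_of_cert {V : Type*} [Fintype V] (E : Finset (V × V)) (f uα : V → ℝ) (α : ℝ)
    (hα : 0 ≤ α) (p : V → ℝ) (hp : p ∈ subdiffJ E uα)
    (hfu : ∀ v, f v - uα v = α * p v) : IsROFMinimizer E f α uα := by
  intro w
  have h1 := hp w
  have h2 : ∑ v, (f v - uα v) ^ 2 - 2 * α * (∑ v, (w v - uα v) * p v)
      ≤ ∑ v, (f v - w v) ^ 2 := by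
    have : ∀ v ∈ Finset.univ (α := V),
        (f v - uα v) ^ 2 - 2 * α * ((w v - uα v) * p v) ≤ (f v - w v) ^ 2 := by
      intro v _
      have e1 : 2 * α * ((w v - uα v) * p v) = 2 * (w v - uα v) * (α * p v) := by ring
      rw [e1, ← hfu v]
      nlinarith [sq_nonneg (w v - uα v)]
    have := Finset.sum_le_sum this
    rw [Finset.sum_sub_distrib] at this
    rw [← Finset.mul_sum] at this
    linarith
  have h3 : α * ((∑ v, (w v - uα v) * p v) + tvJ E uα) ≤ α * tvJ E w :=
    mul_le_mul_of_nonneg_left h1 hα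
  nlinarith

def zR : Fin 5 × Fin 5 → ℝ := fun e =>
  if e = (0,1) then -1 else if e = (1,2) then -1/4 else -1

lemma rof_cert : IsROFMinimizer myE myf 2 myuα := by
  apply isROF_of_cert myE myf myuα 2 (by norm_num) (gdiv myE zR)
  · apply mem_subdiffJ_of_gdiv
    · intro e he
      fin_cases he <;> simp [zR] <;> rw [abs_le] <;> constructor <;> norm_num
    · intro e he
      fin_cases he <;> simp [zR, myuα]
      all_goals first
        | (rw [abs_of_nonpos (by norm_num)]; ring)
        | (rw [abs_of_nonneg (by norm_num)])
        | (rw [abs_of_nonneg (by norm_num)]; ring)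
  · intro v
    fin_cases v <;>
      simp [gdiv, myE, zR, myf, myuα, Finset.sum_insert, Finset.mem_insert,
        Finset.mem_singleton, Prod.ext_iff] <;> norm_num

lemma myu_zero : myu 0 = myf := by
  rw [phase1 0 le_rfl zero_le_one]
  funext v
  fin_cases v <;> norm_num [myf]

lemma conn : (SimpleGraph.fromRel (fun v w : Fin 5 => (v, w) ∈ myE)).Connected := by
  rw [SimpleGraph.connected_iff]
  refine ⟨?_, ⟨0⟩⟩
  have a01 : (SimpleGraph.fromRel fun v w : Fin 5 => (v, w) ∈ myE).Adj 0 1 := by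
    rw [SimpleGraph.fromRel_adj]; exact ⟨by decide, Or.inl (by decide)⟩
  have a12 : (SimpleGraph.fromRel fun v w : Fin 5 => (v, w) ∈ myE).Adj 1 2 := by
    rw [SimpleGraph.fromRel_adj]; exact ⟨by decide, Or.inl (by decide)⟩
  have a23 : (SimpleGraph.fromRel fun v w : Fin 5 => (v, w) ∈ myE).Adj 2 3 := by
    rw [SimpleGraph.fromRel_adj]; exact ⟨by decide, Or.inl (by decide)⟩
  have a24 : (SimpleGraph.fromRel fun v w : Fin 5 => (v, w) ∈ myE).Adj 2 4 := by
    rw [SimpleGraph.fromRel_adj]; exact ⟨by decide, Or.inl (by decide)⟩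
  have key : ∀ x : Fin 5, (SimpleGraph.fromRel fun v w : Fin 5 => (v, w) ∈ myE).Reachable 2 x := by
    intro x
    fin_cases x
    · exact (a12.reachable.symm).trans a01.reachable.symm
    · exact a12.reachable.symm
    · exact SimpleGraph.Reachable.refl _
    · exact a23.reachable
    · exact a24.reachable
  intro x y
  exact (key x).symm.trans (key y)

/-- TV regularization and TV flow on graphs are not equivalent in general. -/
theorem tvflow_rof_not_equivalent :
    ∃ (V : Type) (iV : Fintype V) (_ : Nonempty V) (E : Finset (V × V)),
      (∀ v w : V, (v, w) ∈ E → (w, v) ∉ E) ∧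
      (SimpleGraph.fromRel (fun v w : V => (v, w) ∈ E)).Connected ∧
      ∃ (f : V → ℝ) (u : ℝ → V → ℝ) (α : ℝ) (uα : V → ℝ),
        @IsTVFlowSolution V iV E f u ∧ 0 < α ∧
        @IsROFMinimizer V iV E f α uα ∧ u α ≠ uα := by

  refine ⟨Fin 5, inferInstance, inferInstance, myE, by decide, conn,
    myf, myu, 2, myuα, ⟨myu_zero, ⟨3, myu_lip.lipschitzOnWith⟩, myu', ?_⟩,
    by norm_num, rof_cert, ?_⟩
  · have hnull : ∀ᵐ t ∂(volume : Measure ℝ), t ∉ ({1, 6, 12} : Set ℝ) := by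
      rw [← measure_eq_zero_iff_ae_notMem]
      exact (Set.toFinite _).countable.measure_zero _
    filter_upwards [hnull] with t ht hpos
    simp only [Set.mem_insert_iff, Set.mem_singleton_iff, not_or] at ht
    obtain ⟨ht1, ht6, ht12⟩ := ht
    rcases lt_or_gt_of_ne ht1 with h | h
    · exact ⟨deriv1 t hpos h, sub1 t hpos h⟩
    · rcases lt_or_gt_of_ne ht6 with h6 | h6
      · exact ⟨deriv2 t h h6, sub2 t h h6⟩
      · rcases lt_or_gt_of_ne ht12 with h12 | h12
        · exact ⟨deriv3 t h6 h12, sub3 t h6 h12⟩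
        · exact ⟨deriv4 t h12, sub4 t h12⟩
  · intro hcontra
    have h2 := congrFun hcontra 1
    rw [phase2 2 (by norm_num) (by norm_num)] at h2
    simp [myuα] at h2
    norm_num at h2
end
end

section
/- The jump sets of TV regularization and TV flow solutions on graphs do not evolve monotonically: there exist a finite set V, an oriented edge set E ⊆ V × V with (v,w) ∈ E implying (w,v) ∉ E whose underlying undirected graph is connected, a datum f ∈ ℝ^V, parameters 0 ≤ β₁ < β₂ with Γ_{β₁} ⊊ Γ_{β₂}, and a TV flow solution u with datum f and times 0 ≤ s₁ < s₂ with Γ(s₁) ⊊ Γ(s₂). Here Γ_α = {(v,w) ∈ E : u_α(v) ≠ u_α(w)} is the jump set of the ROF minimizer u_α and Γ(t) = {(v,w) ∈ E : u(t)(v) ≠ u(t)(w)} is the jump set of the flow solution. -/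
open Finset MeasureTheory

noncomputable section

/-! ### Auxiliary constructions for the counterexample -/

/-- The edge set of the counterexample graph on `Fin 6`: a center edge `(0,1)`,
vertex `0` joined to `2, 3`, vertex `1` joined to `4, 5`. -/
def EE : Finset (Fin 6 × Fin 6) := {(0,1),(0,2),(0,3),(1,4),(1,5)}

lemma cons_val_five {α : Type*} (a b c d e f : α) : ![a,b,c,d,e,f] 5 = f := rfl

lemma cons_val_two6 {α : Type*} (a b c d e f : α) : ![a,b,c,d,e,f] 2 = c := rfl

lemma cons_val_three6 {α : Type*} (a b c d e f : α) : ![a,b,c,d,e,f] 3 = d := rfl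

lemma cons_val_four6 {α : Type*} (a b c d e f : α) : ![a,b,c,d,e,f] 4 = e := rfl

lemma tvJ_EE (h : Fin 6 → ℝ) :
    tvJ EE h = |h 1 - h 0| + |h 2 - h 0| + |h 3 - h 0| + |h 4 - h 1| + |h 5 - h 1| := by
  show ∑ e ∈ EE, |h e.2 - h e.1| = _
  rw [show EE = {(0,1),(0,2),(0,3),(1,4),(1,5)} from rfl]
  rw [Finset.sum_insert (by decide), Finset.sum_insert (by decide),
    Finset.sum_insert (by decide), Finset.sum_insert (by decide), Finset.sum_singleton]
  ring

lemma tvJ_sym {a b : ℝ} (ha : 0 ≤ a) (hab : a ≤ b) :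
    tvJ EE ![a, -a, b, b, -b, -b] = 2*a + 4*(b - a) := by
  rw [tvJ_EE]
  norm_num [cons_val_five, cons_val_two6, cons_val_three6, cons_val_four6]
  rw [show -a - a = -(2*a) by ring, abs_neg, abs_of_nonneg (by linarith),
    abs_of_nonneg (by linarith : (0:ℝ) ≤ b - a),
    show -b + a = -(b - a) by ring, abs_neg, abs_of_nonneg (by linarith)]
  ring

lemma key1 (h : Fin 6 → ℝ) :
    -(h 1 - h 0) + (h 2 - h 0) + (h 3 - h 0) - (h 4 - h 1) - (h 5 - h 1) ≤ tvJ EE h := by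
  rw [tvJ_EE]
  have a1 := neg_abs_le (h 1 - h 0)
  have a2 := le_abs_self (h 2 - h 0)
  have a3 := le_abs_self (h 3 - h 0)
  have a4 := neg_abs_le (h 4 - h 1)
  have a5 := neg_abs_le (h 5 - h 1)
  linarith

lemma key2 (h : Fin 6 → ℝ) :
    -(h 1 - h 0) + (1/3)*(h 2 - h 0) + (1/3)*(h 3 - h 0) - (1/3)*(h 4 - h 1) - (1/3)*(h 5 - h 1)
      ≤ tvJ EE h := by
  rw [tvJ_EE]
  have a1 := neg_abs_le (h 1 - h 0)
  have a2 := le_abs_self (h 2 - h 0)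
  have a3 := le_abs_self (h 3 - h 0)
  have a4 := neg_abs_le (h 4 - h 1)
  have a5 := neg_abs_le (h 5 - h 1)
  have b2 := abs_nonneg (h 2 - h 0)
  have b3 := abs_nonneg (h 3 - h 0)
  have b4 := abs_nonneg (h 4 - h 1)
  have b5 := abs_nonneg (h 5 - h 1)
  linarith

lemma mem_s1 {a b : ℝ} (ha : 0 ≤ a) (hab : a ≤ b) :
    (![(-1:ℝ),1,1,1,-1,-1]) ∈ subdiffJ EE ![a,-a,b,b,-b,-b] := by
  intro h
  rw [tvJ_sym ha hab, Fin.sum_univ_six]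
  have k := key1 h
  norm_num [cons_val_five, cons_val_two6, cons_val_three6, cons_val_four6]
  linarith

lemma mem_s2 {c : ℝ} (hc : 0 ≤ c) :
    (![(1:ℝ)/3,-(1/3),1/3,1/3,-(1/3),-(1/3)]) ∈ subdiffJ EE ![c,-c,c,c,-c,-c] := by
  intro h
  rw [tvJ_sym hc le_rfl, Fin.sum_univ_six]
  have k := key2 h
  norm_num [cons_val_five, cons_val_two6, cons_val_three6, cons_val_four6]
  linarith

lemma mem_s3 : (fun _ : Fin 6 => (0:ℝ)) ∈ subdiffJ EE (fun _ : Fin 6 => (0:ℝ)) := by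
  intro h
  have h0 : tvJ EE (fun _ : Fin 6 => (0:ℝ)) = 0 := by rw [tvJ_EE]; norm_num
  rw [h0]
  simp only [mul_zero, Finset.sum_const_zero, add_zero, zero_add]
  rw [tvJ_EE]
  positivity

/-- The datum. -/
def fvec : Fin 6 → ℝ := ![0,0,1,1,-1,-1]

/-- The ROF minimizer at `α = 1/4`. -/
def u2vec : Fin 6 → ℝ := ![1/4,-(1/4),3/4,3/4,-(3/4),-(3/4)]

lemma rof0 : IsROFMinimizer EE fvec 0 fvec := by
  intro w
  simp only [sub_self, zero_mul, zero_pow, Finset.sum_const_zero, zero_add, mul_zero, add_zero]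
  norm_num
  positivity

lemma rof2 : IsROFMinimizer EE fvec (1/4) u2vec := by
  intro w
  have hs := mem_s1 (a := 1/4) (b := 3/4) (by norm_num) (by norm_num) w
  rw [show (![(1:ℝ)/4,-(1/4),3/4,3/4,-(3/4),-(3/4)]) = u2vec from rfl] at hs
  rw [Fin.sum_univ_six] at hs
  rw [Fin.sum_univ_six, Fin.sum_univ_six]
  have e0 : u2vec 0 = 1/4 := rfl
  have e1 : u2vec 1 = -(1/4) := rfl
  have e2 : u2vec 2 = 3/4 := rfl
  have e3 : u2vec 3 = 3/4 := rfl
  have e4 : u2vec 4 = -(3/4) := rfl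
  have e5 : u2vec 5 = -(3/4) := rfl
  have f0 : fvec 0 = 0 := rfl
  have f1 : fvec 1 = 0 := rfl
  have f2 : fvec 2 = 1 := rfl
  have f3 : fvec 3 = 1 := rfl
  have f4 : fvec 4 = -1 := rfl
  have f5 : fvec 5 = -1 := rfl
  rw [e0,e1,e2,e3,e4,e5] at hs ⊢
  rw [f0,f1,f2,f3,f4,f5]
  norm_num [cons_val_five, cons_val_two6, cons_val_three6, cons_val_four6] at hs ⊢
  nlinarith [hs, sq_nonneg (w 0 - 1/4), sq_nonneg (w 1 + 1/4), sq_nonneg (w 2 - 3/4),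
    sq_nonneg (w 3 - 3/4), sq_nonneg (w 4 + 3/4), sq_nonneg (w 5 + 3/4)]

/-! ### The TV flow solution -/

def gfun (t : ℝ) : ℝ := max (min t ((2-t)/3)) 0

def hfun (t : ℝ) : ℝ := max (1-t) (max ((2-t)/3) 0)

def usol (t : ℝ) : Fin 6 → ℝ := ![gfun t, -gfun t, hfun t, hfun t, -hfun t, -hfun t]

def usol' (t : ℝ) : Fin 6 → ℝ :=
  if t < 1/2 then ![1,-1,-1,-1,1,1]
  else if t < 2 then ![-(1/3),1/3,-(1/3),-(1/3),1/3,1/3]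
  else 0

lemma gfun_eq1 {t : ℝ} (h0 : 0 ≤ t) (h1 : t ≤ 1/2) : gfun t = t := by
  unfold gfun
  rw [min_eq_left (by linarith), max_eq_left h0]

lemma hfun_eq1 {t : ℝ} (h1 : t ≤ 1/2) : hfun t = 1 - t := by
  unfold hfun
  rw [max_eq_left (max_le (by linarith) (by linarith))]

lemma gfun_eq2 {t : ℝ} (h1 : 1/2 ≤ t) (h2 : t ≤ 2) : gfun t = (2-t)/3 := by
  unfold gfun
  rw [min_eq_right (by linarith), max_eq_left (by linarith)]

lemma hfun_eq2 {t : ℝ} (h1 : 1/2 ≤ t) (h2 : t ≤ 2) : hfun t = (2-t)/3 := by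
  unfold hfun
  rw [max_eq_left (by linarith : (0:ℝ) ≤ (2-t)/3), max_eq_right (by linarith)]

lemma gfun_eq3 {t : ℝ} (h2 : 2 ≤ t) : gfun t = 0 := by
  unfold gfun
  exact max_eq_right (le_trans (min_le_right _ _) (by linarith))

lemma hfun_eq3 {t : ℝ} (h2 : 2 ≤ t) : hfun t = 0 := by
  unfold hfun
  rw [max_eq_right (by linarith : (2-t)/3 ≤ (0:ℝ)), max_eq_right (by linarith)]

lemma usol_zero : usol 0 = fvec := by
  have hg : gfun 0 = 0 := gfun_eq1 le_rfl (by norm_num)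
  have hh : hfun 0 = 1 := by rw [hfun_eq1 (by norm_num)]; norm_num
  unfold usol fvec
  rw [hg, hh]
  norm_num

lemma usol_quarter : usol (1/4) = u2vec := by
  have hg : gfun (1/4) = 1/4 := gfun_eq1 (by norm_num) (by norm_num)
  have hh : hfun (1/4) = 3/4 := by rw [hfun_eq1 (by norm_num)]; norm_num
  unfold usol u2vec
  rw [hg, hh]

lemma lip_aux : LipschitzWith 1 (fun t : ℝ => (2-t)/3) := by
  apply LipschitzWith.of_dist_le_mul
  intro x y
  rw [Real.dist_eq, Real.dist_eq, NNReal.coe_one, one_mul,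
    show (2-x)/3 - (2-y)/3 = -((x - y)/3) by ring, abs_neg, abs_div]
  rw [abs_of_pos (by norm_num : (0:ℝ) < 3)]
  have := abs_nonneg (x - y)
  linarith

lemma lip_g : LipschitzWith 1 gfun := by
  apply LipschitzWith.of_dist_le_mul
  intro x y
  rw [Real.dist_eq, NNReal.coe_one, one_mul]
  have h1 : |min x ((2-x)/3) - min y ((2-y)/3)| ≤ max |x - y| |(2-x)/3 - (2-y)/3| :=
    abs_min_sub_min_le_max _ _ _ _
  have h2 : |(2-x)/3 - (2-y)/3| ≤ |x - y| := by
    have := lip_aux.dist_le_mul x y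
    rwa [Real.dist_eq, Real.dist_eq, NNReal.coe_one, one_mul] at this
  have h3 : |gfun x - gfun y| ≤ max |min x ((2-x)/3) - min y ((2-y)/3)| |(0:ℝ) - 0| :=
    abs_max_sub_max_le_max _ _ _ _
  rw [Real.dist_eq]
  calc |gfun x - gfun y| ≤ max |min x ((2-x)/3) - min y ((2-y)/3)| |(0:ℝ) - 0| := h3
    _ ≤ |x - y| := by
        apply max_le
        · exact le_trans h1 (max_le le_rfl h2)
        · simpa using abs_nonneg (x - y)

lemma lip_h : LipschitzWith 1 hfun := by
  apply LipschitzWith.of_dist_le_mul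
  intro x y
  rw [Real.dist_eq, Real.dist_eq, NNReal.coe_one, one_mul]
  have h2 : |(2-x)/3 - (2-y)/3| ≤ |x - y| := by
    have := lip_aux.dist_le_mul x y
    rwa [Real.dist_eq, Real.dist_eq, NNReal.coe_one, one_mul] at this
  have h1 : |max ((2-x)/3) 0 - max ((2-y)/3) 0| ≤ max |(2-x)/3 - (2-y)/3| |(0:ℝ) - 0| :=
    abs_max_sub_max_le_max _ _ _ _
  have h3 : |hfun x - hfun y| ≤ max |(1-x) - (1-y)| |max ((2-x)/3) 0 - max ((2-y)/3) 0| :=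
    abs_max_sub_max_le_max _ _ _ _
  have h4 : |(1-x) - (1-y)| = |x - y| := by
    rw [show (1-x) - (1-y) = -(x - y) by ring, abs_neg]
  calc |hfun x - hfun y| ≤ _ := h3
    _ ≤ |x - y| := by
        apply max_le
        · rw [h4]
        · refine le_trans h1 (max_le h2 ?_)
          simpa using abs_nonneg (x - y)

lemma lip_usol : LipschitzWith 1 usol := by
  apply LipschitzWith.of_dist_le_mul
  intro x y
  rw [dist_pi_le_iff (by positivity)]
  intro b
  have hg := lip_g.dist_le_mul x y
  have hh := lip_h.dist_le_mul x y
  have hgn : dist (-gfun x) (-gfun y) ≤ 1 * dist x y := by rwa [dist_neg_neg]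
  have hhn : dist (-hfun x) (-hfun y) ≤ 1 * dist x y := by rwa [dist_neg_neg]
  fin_cases b <;> simpa [usol, cons_val_five] using (by assumption : _ ≤ (1:NNReal) * dist x y)


lemma jump_ssub :
    {e : Fin 6 × Fin 6 | e ∈ EE ∧ fvec e.1 ≠ fvec e.2} ⊂
      {e : Fin 6 × Fin 6 | e ∈ EE ∧ u2vec e.1 ≠ u2vec e.2} := by
  constructor
  · rintro ⟨a, b⟩ ⟨he, -⟩
    refine ⟨he, ?_⟩
    fin_cases he <;> norm_num [u2vec, cons_val_five, cons_val_two6, cons_val_three6, cons_val_four6]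
  · intro hsub
    have h1 : ((0,1) : Fin 6 × Fin 6) ∈
        {e : Fin 6 × Fin 6 | e ∈ EE ∧ u2vec e.1 ≠ u2vec e.2} := by
      refine ⟨by decide, ?_⟩
      norm_num [u2vec]
    exact (hsub h1).2 rfl

lemma flow_ae : ∀ᵐ t ∂(volume : Measure ℝ), 0 < t →
    HasDerivAt usol (usol' t) t ∧ (fun v => -(usol' t v)) ∈ subdiffJ EE (usol t) := by
  have h12 : ∀ᵐ t : ℝ ∂volume, t ≠ (1/2 : ℝ) := by
    rw [ae_iff]
    have : {a : ℝ | ¬ a ≠ 1/2} = {(1/2 : ℝ)} := by ext a; simp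
    rw [this]
    exact measure_singleton _
  have h22 : ∀ᵐ t : ℝ ∂volume, t ≠ (2 : ℝ) := by
    rw [ae_iff]
    have : {a : ℝ | ¬ a ≠ 2} = {(2 : ℝ)} := by ext a; simp
    rw [this]
    exact measure_singleton _
  filter_upwards [h12, h22] with t hne1 hne2 hpos
  rcases lt_trichotomy t (1/2) with hlt | heq | hgt
  · -- Phase 1 : 0 < t < 1/2
    have hev : usol =ᶠ[nhds t] (fun x => ![x, -x, 1-x, 1-x, -(1-x), -(1-x)]) := by
      filter_upwards [Ioo_mem_nhds hpos hlt] with x hx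
      unfold usol
      rw [gfun_eq1 (le_of_lt hx.1) (le_of_lt hx.2), hfun_eq1 (le_of_lt hx.2)]
    have hd : HasDerivAt (fun x : ℝ => (![x, -x, 1-x, 1-x, -(1-x), -(1-x)] : Fin 6 → ℝ))
        (![1,-1,-1,-1,1,1]) t := by
      rw [hasDerivAt_pi]
      intro i
      fin_cases i <;> simp only [Matrix.cons_val_zero, Matrix.cons_val_one, Matrix.head_cons,
        cons_val_five, Matrix.cons_val_succ]
      · exact hasDerivAt_id t
      · exact (hasDerivAt_id t).neg
      · exact (hasDerivAt_id t).const_sub 1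
      · exact (hasDerivAt_id t).const_sub 1
      · convert ((hasDerivAt_id t).const_sub 1).neg using 1 <;> norm_num [funext_iff]
      · convert ((hasDerivAt_id t).const_sub 1).neg using 1 <;> norm_num [funext_iff]
    have hus : usol' t = ![1,-1,-1,-1,1,1] := if_pos hlt
    constructor
    · rw [hus]
      exact hd.congr_of_eventuallyEq hev
    · have h1 : usol t = ![t, -t, 1-t, 1-t, -(1-t), -(1-t)] := by
        unfold usol
        rw [gfun_eq1 (le_of_lt hpos) (le_of_lt hlt), hfun_eq1 (le_of_lt hlt)]
      have h2 : (fun v => -(usol' t v)) = ![(-1:ℝ),1,1,1,-1,-1] := by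
        funext v
        rw [hus]
        fin_cases v <;> norm_num [cons_val_five]
      rw [h1, h2]
      exact mem_s1 (le_of_lt hpos) (by linarith)
  · exact absurd heq hne1
  · rcases lt_trichotomy t 2 with hlt2 | heq2 | hgt2
    · -- Phase 2 : 1/2 < t < 2
      have hev : usol =ᶠ[nhds t]
          (fun x => ![(2-x)/3, -((2-x)/3), (2-x)/3, (2-x)/3, -((2-x)/3), -((2-x)/3)]) := by
        filter_upwards [Ioo_mem_nhds hgt hlt2] with x hx
        unfold usol
        rw [gfun_eq2 (le_of_lt hx.1) (le_of_lt hx.2), hfun_eq2 (le_of_lt hx.1) (le_of_lt hx.2)]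
      have hd : HasDerivAt
          (fun x : ℝ => (![(2-x)/3, -((2-x)/3), (2-x)/3, (2-x)/3, -((2-x)/3), -((2-x)/3)] :
            Fin 6 → ℝ))
          (![-(1/3),1/3,-(1/3),-(1/3),1/3,1/3]) t := by
        rw [hasDerivAt_pi]
        intro i
        have hb : HasDerivAt (fun x : ℝ => (2-x)/3) (-(1/3)) t := by
          have h := ((hasDerivAt_id t).const_sub 2).div_const 3
          norm_num at h
          exact h
        fin_cases i <;> simp only [Matrix.cons_val_zero, Matrix.cons_val_one, Matrix.head_cons,
          cons_val_five, Matrix.cons_val_succ]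
        · exact hb
        · convert hb.neg using 1 <;> norm_num [funext_iff]
        · exact hb
        · exact hb
        · convert hb.neg using 1 <;> norm_num [funext_iff]
        · convert hb.neg using 1 <;> norm_num [funext_iff]
      have hus : usol' t = ![-(1/3),1/3,-(1/3),-(1/3),1/3,1/3] := by
        unfold usol'
        rw [if_neg (by linarith), if_pos hlt2]
      constructor
      · rw [hus]
        exact hd.congr_of_eventuallyEq hev
      · have h1 : usol t = ![(2-t)/3, -((2-t)/3), (2-t)/3, (2-t)/3, -((2-t)/3), -((2-t)/3)] := by
          unfold usol
          rw [gfun_eq2 (le_of_lt hgt) (le_of_lt hlt2), hfun_eq2 (le_of_lt hgt) (le_of_lt hlt2)]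
        have h2 : (fun v => -(usol' t v)) = ![(1:ℝ)/3,-(1/3),1/3,1/3,-(1/3),-(1/3)] := by
          funext v
          rw [hus]
          fin_cases v <;> norm_num [cons_val_five]
        rw [h1, h2]
        exact mem_s2 (by linarith)
    · exact absurd heq2 hne2
    · -- Phase 3 : t > 2
      have hev : usol =ᶠ[nhds t] (fun _ => (fun _ : Fin 6 => (0:ℝ))) := by
        filter_upwards [Ioi_mem_nhds hgt2] with x hx
        have hx2 : (2:ℝ) ≤ x := le_of_lt hx
        funext v
        show (![gfun x, -gfun x, hfun x, hfun x, -hfun x, -hfun x] : Fin 6 → ℝ) v = 0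
        rw [gfun_eq3 hx2, hfun_eq3 hx2]
        fin_cases v <;> norm_num [cons_val_five]
      have hus : usol' t = 0 := by
        unfold usol'
        rw [if_neg (by linarith), if_neg (by linarith)]
      constructor
      · rw [hus]
        exact (hasDerivAt_const t _).congr_of_eventuallyEq hev
      · have h1 : usol t = (fun _ : Fin 6 => (0:ℝ)) := by
          funext v
          show (![gfun t, -gfun t, hfun t, hfun t, -hfun t, -hfun t] : Fin 6 → ℝ) v = 0
          rw [gfun_eq3 (le_of_lt hgt2), hfun_eq3 (le_of_lt hgt2)]
          fin_cases v <;> norm_num [cons_val_five]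
        have h2 : (fun v => -(usol' t v)) = (fun _ : Fin 6 => (0:ℝ)) := by
          funext v
          rw [hus]
          norm_num
        rw [h1, h2]
        exact mem_s3

lemma flow_sol : IsTVFlowSolution EE fvec usol := by
  exact ⟨usol_zero, ⟨1, lip_usol.lipschitzOnWith⟩, usol', flow_ae⟩

/-! ### The main theorem -/

/-- the jump sets of ROF minimizers and TV flow solutions on graphs do not
evolve monotonically. -/
theorem jump_sets_not_monotone :
    ∃ (V : Type) (iV : Fintype V) (_ : Nonempty V) (E : Finset (V × V)),
      (∀ v w : V, (v, w) ∈ E → (w, v) ∉ E) ∧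
      (SimpleGraph.fromRel (fun v w : V => (v, w) ∈ E)).Connected ∧
      ∃ f : V → ℝ,
        (∃ (β₁ β₂ : ℝ) (u₁ u₂ : V → ℝ), 0 ≤ β₁ ∧ β₁ < β₂ ∧
          @IsROFMinimizer V iV E f β₁ u₁ ∧ @IsROFMinimizer V iV E f β₂ u₂ ∧
          {e : V × V | e ∈ E ∧ u₁ e.1 ≠ u₁ e.2} ⊂
            {e : V × V | e ∈ E ∧ u₂ e.1 ≠ u₂ e.2}) ∧
        (∃ (u : ℝ → V → ℝ) (s₁ s₂ : ℝ), @IsTVFlowSolution V iV E f u ∧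
          0 ≤ s₁ ∧ s₁ < s₂ ∧
          {e : V × V | e ∈ E ∧ u s₁ e.1 ≠ u s₁ e.2} ⊂
            {e : V × V | e ∈ E ∧ u s₂ e.1 ≠ u s₂ e.2}) := by
  refine ⟨Fin 6, inferInstance, ⟨0⟩, EE, by decide, ?_, fvec, ?_, ?_⟩
  · -- connectivity
    set G := SimpleGraph.fromRel (fun v w : Fin 6 => (v, w) ∈ EE) with hG
    have a01 : G.Adj 0 1 := by rw [hG, SimpleGraph.fromRel_adj]; exact ⟨by decide, Or.inl (by decide)⟩
    have a02 : G.Adj 0 2 := by rw [hG, SimpleGraph.fromRel_adj]; exact ⟨by decide, Or.inl (by decide)⟩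
    have a03 : G.Adj 0 3 := by rw [hG, SimpleGraph.fromRel_adj]; exact ⟨by decide, Or.inl (by decide)⟩
    have a14 : G.Adj 1 4 := by rw [hG, SimpleGraph.fromRel_adj]; exact ⟨by decide, Or.inl (by decide)⟩
    have a15 : G.Adj 1 5 := by rw [hG, SimpleGraph.fromRel_adj]; exact ⟨by decide, Or.inl (by decide)⟩
    have r : ∀ v : Fin 6, G.Reachable 0 v := by
      intro v
      fin_cases v
      · exact SimpleGraph.Reachable.refl 0
      · exact a01.reachable
      · exact a02.reachable
      · exact a03.reachable
      · exact a01.reachable.trans a14.reachable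
      · exact a01.reachable.trans a15.reachable
    exact ⟨fun u v => (r u).symm.trans (r v)⟩
  · exact ⟨0, 1/4, fvec, u2vec, le_rfl, by norm_num, rof0, rof2, jump_ssub⟩
  · refine ⟨usol, 0, 1/4, flow_sol, le_rfl, by norm_num, ?_⟩
    rw [usol_zero, usol_quarter]
    exact jump_ssub

end
end
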